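/- Let L ⊆ ℝⁿ be a full-rank lattice, x ∈ ℝⁿ, and v ∈ L a point with ‖x − v‖ = dist(x, L). Then for every sublattice L' ⊆ L (a discrete subgroup of L that is full rank in its real span), the orthogonal projection of x − v onto span(L') has Euclidean norm at most μ(L'). -/

import Mathlib

open Metric Submodule
noncomputable section

/-- The covering radius of a lattice (given as a set): the supremum, over points `x` in the
real span of `A`, of the distance from `x` to `A`. -/
def covRad {E : Type*} [NormedAddCommGroup E] [NormedSpace ℝ E] (A : Set E) : ℝ :=
  sSup ((fun x => Metric.infDist x A) '' ((Submodule.span ℝ A : Submodule ℝ E) : Set E))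

/-- If `v ∈ L` is a closest lattice point to `x`, then for any sublattice `L' ⊆ L`, the
orthogonal projection of `x − v` onto `span(L')` has norm at most the covering radius of `L'`. -/
theorem proj_of_closest_vector_le_covRad
    (n : ℕ) (L : Submodule ℤ (EuclideanSpace ℝ (Fin n))) [DiscreteTopology L]
    (hL : IsZLattice ℝ L)
    (x : EuclideanSpace ℝ (Fin n)) (v : EuclideanSpace ℝ (Fin n)) (hv : v ∈ L)
    (hclosest : ‖x - v‖ = Metric.infDist x (L : Set (EuclideanSpace ℝ (Fin n))))
    (L' : Submodule ℤ (EuclideanSpace ℝ (Fin n))) (hL' : L' ≤ L) :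
    ‖(orthogonalProjection (Submodule.span ℝ (L' : Set (EuclideanSpace ℝ (Fin n)))) (x - v) :
        EuclideanSpace ℝ (Fin n))‖
      ≤ covRad (L' : Set (EuclideanSpace ℝ (Fin n))) := by
  classical
  unfold covRad
  set V : Submodule ℝ (EuclideanSpace ℝ (Fin n)) := Submodule.span ℝ (L' : Set (EuclideanSpace ℝ (Fin n))) with hV
  set u : (EuclideanSpace ℝ (Fin n)) := x - v with hu
  set p : (EuclideanSpace ℝ (Fin n)) := (orthogonalProjection V u : (EuclideanSpace ℝ (Fin n))) with hp
  have hpV : p ∈ V := (orthogonalProjection V u).2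
  have hqV : u - p ∈ Vᗮ := sub_starProjection_mem_orthogonal u
  -- L' is nonempty
  have hne : (L' : Set (EuclideanSpace ℝ (Fin n))).Nonempty := ⟨0, L'.zero_mem⟩
  -- Step 1 : ‖p‖ ≤ dist p w for every w ∈ L'.
  have step1 : ∀ w ∈ L', ‖p‖ ≤ ‖p - w‖ := by
    intro w hw
    have hwV : w ∈ V := Submodule.subset_span hw
    -- ‖u‖ ≤ ‖u - w‖
    have h1 : ‖u‖ ≤ ‖u - w‖ := by
      have hmem : v + w ∈ L := L.add_mem hv (hL' hw)
      have := Metric.infDist_le_dist_of_mem (x := x) hmem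
      rw [← hclosest, dist_eq_norm] at this
      calc ‖u‖ ≤ ‖x - (v + w)‖ := this
        _ = ‖u - w‖ := by rw [hu, sub_add_eq_sub_sub]
    -- Pythagoras
    have key : ∀ y ∈ V, ‖u - y‖ ^ 2 = ‖p - y‖ ^ 2 + ‖u - p‖ ^ 2 := by
      intro y hy
      have horth : (inner ℝ (p - y) (u - p) : ℝ) = 0 :=
        hqV (p - y) (V.sub_mem hpV hy)
      have : u - y = (p - y) + (u - p) := by abel
      rw [this, norm_add_sq_real, horth]
      ring
    have h2 : ‖u‖ ^ 2 = ‖p‖ ^ 2 + ‖u - p‖ ^ 2 := by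
      have := key 0 V.zero_mem
      simpa using this
    have h3 : ‖u - w‖ ^ 2 = ‖p - w‖ ^ 2 + ‖u - p‖ ^ 2 := key w hwV
    have hsq : ‖p‖ ^ 2 ≤ ‖p - w‖ ^ 2 := by
      have : ‖u‖ ^ 2 ≤ ‖u - w‖ ^ 2 := by
        have := pow_le_pow_left₀ (norm_nonneg u) h1 2
        simpa using this
      nlinarith [h2, h3]
    have := Real.sqrt_le_sqrt hsq
    rwa [Real.sqrt_sq (norm_nonneg _), Real.sqrt_sq (norm_nonneg _)] at this
  -- hence ‖p‖ ≤ infDist p L'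
  have hinf : ‖p‖ ≤ Metric.infDist p (L' : Set (EuclideanSpace ℝ (Fin n))) := by
    rw [Metric.infDist_eq_iInf]
    have : Nonempty (L' : Set (EuclideanSpace ℝ (Fin n))) := hne.to_subtype
    refine le_ciInf fun w => ?_
    rw [dist_eq_norm]
    exact step1 w w.2
  -- Step 2 : the set of distances is bounded above.
  -- L' is finitely generated.
  have hfinL : Module.Finite ℤ L := ZLattice.module_finite ℝ L
  have hLfg : L.FG := (Module.Finite.iff_fg).1 hfinL
  have hL'fg : L'.FG := by
    have : IsNoetherian ℤ L := isNoetherian_of_isNoetherianRing_of_finite ℤ L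
    have hfg : (L'.comap L.subtype).FG := IsNoetherian.noetherian _
    have : Submodule.map L.subtype (L'.comap L.subtype) = L' :=
      Submodule.map_comap_eq_self (by rw [Submodule.range_subtype]; exact hL')
    rw [← this]
    exact hfg.map _
  obtain ⟨S, hS⟩ := hL'fg
  have hSsub : (S : Set (EuclideanSpace ℝ (Fin n))) ⊆ (L' : Set (EuclideanSpace ℝ (Fin n))) := by
    rw [← hS]; exact Submodule.subset_span
  have hVS : V = Submodule.span ℝ (S : Set (EuclideanSpace ℝ (Fin n))) := by
    rw [hV, ← hS, ← Submodule.span_span_of_tower ℤ ℝ (S : Set (EuclideanSpace ℝ (Fin n)))]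
  set C : ℝ := ∑ i ∈ S, ‖i‖ with hC
  have hbdd : ∀ y ∈ V, Metric.infDist y (L' : Set (EuclideanSpace ℝ (Fin n))) ≤ C := by
    intro y hy
    rw [hVS] at hy
    obtain ⟨f, hf⟩ := mem_span_finset.1 hy
    set w : (EuclideanSpace ℝ (Fin n)) := ∑ i ∈ S, round (f i) • i with hw
    have hwL' : w ∈ L' := by
      refine Submodule.sum_mem _ fun i hi => Submodule.smul_mem _ _ (hSsub hi)
    have hyw : y - w = ∑ i ∈ S, (f i - (round (f i) : ℝ)) • i := by
      rw [hw, ← hf.2, ← Finset.sum_sub_distrib]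
      congr 1
      ext i
      rw [sub_smul, Int.cast_smul_eq_zsmul]
    have hle : ‖y - w‖ ≤ C := by
      rw [hyw]
      calc ‖∑ i ∈ S, (f i - (round (f i) : ℝ)) • i‖
          ≤ ∑ i ∈ S, ‖(f i - (round (f i) : ℝ)) • i‖ := norm_sum_le _ _
        _ ≤ ∑ i ∈ S, ‖i‖ := by
            refine Finset.sum_le_sum fun i _ => ?_
            rw [norm_smul, Real.norm_eq_abs]
            have h1 : |f i - (round (f i) : ℝ)| ≤ 1 / 2 := abs_sub_round _
            nlinarith [norm_nonneg i, abs_nonneg (f i - (round (f i) : ℝ))]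
    calc Metric.infDist y (L' : Set (EuclideanSpace ℝ (Fin n))) ≤ dist y w := Metric.infDist_le_dist_of_mem hwL'
      _ = ‖y - w‖ := dist_eq_norm _ _
      _ ≤ C := hle
  -- conclude
  have hmemset : Metric.infDist p (L' : Set (EuclideanSpace ℝ (Fin n))) ∈
      ((fun y => Metric.infDist y (L' : Set (EuclideanSpace ℝ (Fin n)))) '' (V : Set (EuclideanSpace ℝ (Fin n)))) := ⟨p, hpV, rfl⟩
  have hbddAbove : BddAbove ((fun y => Metric.infDist y (L' : Set (EuclideanSpace ℝ (Fin n)))) '' (V : Set (EuclideanSpace ℝ (Fin n)))) := by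
    refine ⟨C, fun a ha => ?_⟩
    obtain ⟨y, hy, rfl⟩ := ha
    exact hbdd y hy
  exact hinf.trans (le_csSup hbddAbove hmemset)
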